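/- arXiv:2304.11449 — 4 statements merged into one kernel-verified Lean document; each statement's English description precedes it below -/
import Mathlib

section
/- Let f and g be two differentiable convex functions on the real line. Then for any real a and any b > 0, |f'(a) - g'(a)| ≤ g'(a + b) - g'(a - b) + d/b, where d = |f(a+b) - g(a+b)| + |f(a-b) - g(a-b)| + |f(a) - g(a)|. -/
/-- Lemma 3.2 in Panchenko: for differentiable convex `f, g : ℝ → ℝ`,
any `a` and `b > 0`,
`|f'(a) - g'(a)| ≤ g'(a+b) - g'(a-b) + d/b` with
`d = |f(a+b) - g(a+b)| + |f(a-b) - g(a-b)| + |f(a) - g(a)|`. -/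
theorem stmt0 (f g : ℝ → ℝ) (hf : Differentiable ℝ f) (hg : Differentiable ℝ g)
    (hfc : ConvexOn ℝ Set.univ f) (hgc : ConvexOn ℝ Set.univ g)
    (a b : ℝ) (hb : 0 < b) :
    |deriv f a - deriv g a| ≤
      deriv g (a + b) - deriv g (a - b) +
        (|f (a + b) - g (a + b)| + |f (a - b) - g (a - b)| + |f a - g a|) / b := by
  have hab1 : a < a + b := by linarith
  have hab2 : a - b < a := by linarith
  have hs1 : slope f a (a + b) = (f (a + b) - f a) / b := by
    rw [slope_def_field]; ring_nf
  have hs2 : slope f (a - b) a = (f a - f (a - b)) / b := by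
    rw [slope_def_field]; ring_nf
  have hs3 : slope g a (a + b) = (g (a + b) - g a) / b := by
    rw [slope_def_field]; ring_nf
  have hs4 : slope g (a - b) a = (g a - g (a - b)) / b := by
    rw [slope_def_field]; ring_nf
  have hs5 : slope g (a + b - b) (a + b) = (g (a + b) - g a) / b := by
    rw [slope_def_field]; ring_nf
  have hs6 : slope g (a - b) (a - b + b) = (g a - g (a - b)) / b := by
    rw [slope_def_field]; ring_nf
  have h1 : deriv f a ≤ (f (a + b) - f a) / b := hs1 ▸
    hfc.deriv_le_slope (Set.mem_univ a) (Set.mem_univ _) hab1 (hf a)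
  have h2 : (f a - f (a - b)) / b ≤ deriv f a := hs2 ▸
    hfc.slope_le_deriv (Set.mem_univ _) (Set.mem_univ a) hab2 (hf a)
  have h3 : deriv g a ≤ (g (a + b) - g a) / b := hs3 ▸
    hgc.deriv_le_slope (Set.mem_univ a) (Set.mem_univ _) hab1 (hg a)
  have h4 : (g a - g (a - b)) / b ≤ deriv g a := hs4 ▸
    hgc.slope_le_deriv (Set.mem_univ _) (Set.mem_univ a) hab2 (hg a)
  have h5 : (g (a + b) - g a) / b ≤ deriv g (a + b) := hs5 ▸
    hgc.slope_le_deriv (Set.mem_univ _) (Set.mem_univ _) (by linarith) (hg (a + b))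
  have h6 : deriv g (a - b) ≤ (g a - g (a - b)) / b := by
    have := hgc.deriv_le_slope (Set.mem_univ (a - b)) (Set.mem_univ (a - b + b))
      (by linarith) (hg (a - b))
    rw [hs6] at this
    simpa using this
  have e1 : f (a + b) - g (a + b) ≤ |f (a + b) - g (a + b)| := le_abs_self _
  have e2 : -(|f (a - b) - g (a - b)|) ≤ f (a - b) - g (a - b) := neg_abs_le _
  have e3 : f a - g a ≤ |f a - g a| := le_abs_self _
  have e4 : -(|f a - g a|) ≤ f a - g a := neg_abs_le _
  have h5' := (div_le_iff₀ hb).mp h5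
  have h6' := (le_div_iff₀ hb).mp h6
  have hE : (|f (a + b) - g (a + b)| + |f (a - b) - g (a - b)| + |f a - g a|) / b * b =
      |f (a + b) - g (a + b)| + |f (a - b) - g (a - b)| + |f a - g a| :=
    div_mul_cancel₀ _ hb.ne'
  have e5 : f (a - b) - g (a - b) ≤ |f (a - b) - g (a - b)| := le_abs_self _
  have e6 : -(|f (a + b) - g (a + b)|) ≤ f (a + b) - g (a + b) := neg_abs_le _
  have n1 : 0 ≤ |f (a + b) - g (a + b)| := abs_nonneg _
  have n2 : 0 ≤ |f (a - b) - g (a - b)| := abs_nonneg _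
  have n3 : 0 ≤ |f a - g a| := abs_nonneg _
  rw [abs_sub_le_iff]
  constructor
  · have key : (f (a + b) - f a) / b - (g a - g (a - b)) / b ≤
        deriv g (a + b) - deriv g (a - b) +
          (|f (a + b) - g (a + b)| + |f (a - b) - g (a - b)| + |f a - g a|) / b := by
      rw [div_sub_div_same, div_le_iff₀ hb, add_mul, sub_mul, hE]
      linarith
    linarith
  · have key : (g (a + b) - g a) / b - (f a - f (a - b)) / b ≤
        deriv g (a + b) - deriv g (a - b) +
          (|f (a + b) - g (a + b)| + |f (a - b) - g (a - b)| + |f a - g a|) / b := by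
      rw [div_sub_div_same, div_le_iff₀ hb, add_mul, sub_mul, hE]
      linarith
    linarith
end

section
/- Let π be a probability distribution on ℝ supported on finitely many points x₁ < x₂ < ⋯ < x_s with s ≥ 2, all contained in [-M, M], and let δ = min_i (x_{i+1} - x_i)/2. Let Θ ~ π and G ~ N(0,1) independent, and Y = Θ + β^{-1}G. Then E[(Θ - Θ̂(Y))²] ≤ (16 M²/(δ β √(2π))) e^{-δ² β²/8}, where Θ̂(y) is the point of supp(π) nearest to y. Consequently E[Var(Θ | β²Θ + βG)] ≤ (16 M²/(δ β √(2π))) e^{-δ² β²/8}. -/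
open MeasureTheory ProbabilityTheory

namespace Stmt10Aux

open Real NNReal

variable {s : ℕ} (x : Fin s → ℝ)

/-- indices attaining the minimal distance to `y` -/
noncomputable def nearSet (y : ℝ) : Finset (Fin s) :=
  Finset.univ.filter (fun i => ∀ j, |x i - y| ≤ |x j - y|)

lemma nearSet_nonempty (hs : 0 < s) (y : ℝ) : (nearSet x y).Nonempty := by
  have : (Finset.univ : Finset (Fin s)).Nonempty := by
    exact ⟨⟨0, hs⟩, Finset.mem_univ _⟩
  obtain ⟨i, -, hi⟩ := Finset.exists_min_image Finset.univ (fun i => |x i - y|) this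
  exact ⟨i, Finset.mem_filter.2 ⟨Finset.mem_univ _, fun j => hi j (Finset.mem_univ _)⟩⟩

lemma mem_nearSet_iff {y : ℝ} {i : Fin s} :
    i ∈ nearSet x y ↔ ∀ j, |x i - y| ≤ |x j - y| := by
  simp [nearSet]

noncomputable def nearIdx (hs : 0 < s) (y : ℝ) : Fin s :=
  (nearSet x y).min' (nearSet_nonempty x hs y)

noncomputable def near (hs : 0 < s) (y : ℝ) : ℝ := x (nearIdx x hs y)

lemma near_mem (hs : 0 < s) (y : ℝ) : near x hs y ∈ Set.range x := ⟨_, rfl⟩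

lemma near_le (hs : 0 < s) (y : ℝ) (i : Fin s) : |near x hs y - y| ≤ |x i - y| := by
  have h := (nearSet x y).min'_mem (nearSet_nonempty x hs y)
  rw [mem_nearSet_iff] at h
  exact h i

lemma nearIdx_eq_iff (hs : 0 < s) {y : ℝ} {i : Fin s} :
    nearIdx x hs y = i ↔ i ∈ nearSet x y ∧ ∀ j, j < i → j ∉ nearSet x y := by
  constructor
  · rintro rfl
    refine ⟨(nearSet x y).min'_mem _, fun j hj hjmem => ?_⟩
    exact absurd ((nearSet x y).min'_le j hjmem) (not_le.2 hj)
  · rintro ⟨hi, hlt⟩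
    have h1 : (nearSet x y).min' (nearSet_nonempty x hs y) ≤ i :=
      (nearSet x y).min'_le i hi
    rcases lt_or_eq_of_le h1 with h | h
    · exact absurd ((nearSet x y).min'_mem _) (hlt _ h)
    · exact h

lemma measurable_nearSet_mem (i : Fin s) : MeasurableSet {y : ℝ | i ∈ nearSet x y} := by
  have : {y : ℝ | i ∈ nearSet x y} = ⋂ j, {y | |x i - y| ≤ |x j - y|} := by
    ext y; simp [mem_nearSet_iff]
  rw [this]
  refine MeasurableSet.iInter fun j => measurableSet_le ?_ ?_
  · exact (measurable_const.sub measurable_id).abs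
  · exact (measurable_const.sub measurable_id).abs

lemma measurable_nearIdx (hs : 0 < s) : Measurable (nearIdx x hs) := by
  refine measurable_to_countable' fun i => ?_
  have : nearIdx x hs ⁻¹' {i}
      = {y | i ∈ nearSet x y} ∩ ⋂ j, {y : ℝ | j < i → j ∉ nearSet x y} := by
    ext y
    simp only [Set.mem_preimage, Set.mem_singleton_iff, nearIdx_eq_iff x hs,
      Set.mem_inter_iff, Set.mem_setOf_eq, Set.mem_iInter]
  rw [this]
  refine (measurable_nearSet_mem x i).inter (MeasurableSet.iInter fun j => ?_)
  by_cases hj : j < i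
  · simp only [hj, forall_true_left]
    exact (measurable_nearSet_mem x j).compl
  · simp only [hj]
    simp
lemma measurable_near (hs : 0 < s) : Measurable (near x hs) := by
  exact (Measurable.of_discrete (f := x)).comp (measurable_nearIdx x hs)


lemma gaussian_Ici_le {t : ℝ} (ht : 0 < t) :
    ((gaussianReal 0 1) (Set.Ici t)).toReal ≤ (Real.sqrt (2 * π))⁻¹ * t⁻¹ * rexp (-t ^ 2 / 2) := by
  have h1 : (1 : ℝ≥0) ≠ 0 := one_ne_zero
  rw [gaussianReal_apply_eq_integral 0 h1 (Set.Ici t)]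
  rw [ENNReal.toReal_ofReal (setIntegral_nonneg measurableSet_Ici
    (fun y _ => gaussianPDFReal_nonneg 0 1 y))]
  have hpdf : ∀ y : ℝ, gaussianPDFReal 0 1 y = (Real.sqrt (2 * π))⁻¹ * rexp (-y ^ 2 / 2) := by
    intro y
    simp [gaussianPDFReal]
  set c : ℝ := (Real.sqrt (2 * π))⁻¹ * rexp (t ^ 2 / 2) with hc
  have hsqrt : 0 < Real.sqrt (2 * π) := Real.sqrt_pos.2 (by positivity)
  have hcpos : 0 < c := by positivity
  have hint : IntegrableOn (fun y : ℝ => c * rexp (-(t * y))) (Set.Ici t) := by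
    rw [integrableOn_Ici_iff_integrableOn_Ioi]
    have := (exp_neg_integrableOn_Ioi t ht)
    simp_rw [neg_mul] at this ⊢
    exact this.const_mul c
  have hmono : ∫ y in Set.Ici t, gaussianPDFReal 0 1 y
      ≤ ∫ y in Set.Ici t, c * rexp (-(t * y)) := by
    refine setIntegral_mono_on ((integrable_gaussianPDFReal 0 1).restrict) hint
      measurableSet_Ici (fun y _ => ?_)
    rw [hpdf y, hc, mul_assoc, ← Real.exp_add]
    refine mul_le_mul_of_nonneg_left (Real.exp_le_exp.2 ?_) (by positivity)
    nlinarith [sq_nonneg (y - t)]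
  refine hmono.trans ?_
  have hval : ∫ y in Set.Ici t, rexp (-(t * y)) = t⁻¹ * rexp (-(t * t)) := by
    rw [MeasureTheory.integral_Ici_eq_integral_Ioi]
    have := integral_comp_mul_left_Ioi (fun u => rexp (-u)) t ht
    simp only [smul_eq_mul] at this
    rw [this, integral_exp_neg_Ioi]
  rw [integral_const_mul, hval]
  rw [hc]
  rw [le_iff_lt_or_eq]; right
  have : rexp (t ^ 2 / 2) * (t⁻¹ * rexp (-(t * t))) = t⁻¹ * rexp (-t ^ 2 / 2) := by
    rw [mul_left_comm, ← Real.exp_add]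
    ring_nf
  rw [mul_assoc, this, mul_assoc]

lemma gaussian_Iic_eq (t : ℝ) :
    (gaussianReal 0 1) (Set.Iic (-t)) = (gaussianReal 0 1) (Set.Ici t) := by
  rw [gaussianReal_apply_eq_integral 0 one_ne_zero, gaussianReal_apply_eq_integral 0 one_ne_zero]
  congr 1
  have heven : ∀ y : ℝ, gaussianPDFReal 0 1 (-y) = gaussianPDFReal 0 1 y := by
    intro y; simp [gaussianPDFReal]
  calc ∫ y in Set.Iic (-t), gaussianPDFReal 0 1 y
      = ∫ y in Set.Iic (-t), gaussianPDFReal 0 1 (-y) := by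
        refine setIntegral_congr_fun measurableSet_Iic fun y _ => (heven y).symm
    _ = ∫ y in Set.Ioi (- -t), gaussianPDFReal 0 1 y := integral_comp_neg_Iic _ _
    _ = ∫ y in Set.Ici t, gaussianPDFReal 0 1 y := by
        rw [neg_neg, MeasureTheory.integral_Ici_eq_integral_Ioi]

lemma gaussian_abs_tail {t : ℝ} (ht : 0 < t) :
    ((gaussianReal 0 1) {y : ℝ | t ≤ |y|}).toReal
      ≤ 2 / (t * Real.sqrt (2 * π)) * rexp (-t ^ 2 / 2) := by
  have hsub : {y : ℝ | t ≤ |y|} ⊆ Set.Iic (-t) ∪ Set.Ici t := by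
    intro y hy
    have hy' : t ≤ |y| := hy
    rcases le_abs.mp hy' with h | h
    · right; exact Set.mem_Ici.2 h
    · left; exact Set.mem_Iic.2 (by linarith)
  have hIic := gaussian_Iic_eq t
  have hmeas : ((gaussianReal 0 1) {y : ℝ | t ≤ |y|}).toReal
      ≤ ((gaussianReal 0 1) (Set.Iic (-t) ∪ Set.Ici t)).toReal := by
    refine ENNReal.toReal_mono (measure_ne_top _ _) (measure_mono hsub)
  refine hmeas.trans ?_
  have h2 : ((gaussianReal 0 1) (Set.Iic (-t) ∪ Set.Ici t)).toReal
      ≤ 2 * ((gaussianReal 0 1) (Set.Ici t)).toReal := by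
    have := measure_union_le (μ := gaussianReal 0 1) (Set.Iic (-t)) (Set.Ici t)
    have h3 := ENNReal.toReal_mono ?_ this
    · rw [ENNReal.toReal_add (measure_ne_top _ _) (measure_ne_top _ _), hIic] at h3
      linarith
    · exact ENNReal.add_ne_top.2 ⟨measure_ne_top _ _, measure_ne_top _ _⟩
  refine h2.trans ?_
  have := gaussian_Ici_le ht
  have hsqrt : 0 < Real.sqrt (2 * π) := Real.sqrt_pos.2 (by positivity)
  have h4 : 2 / (t * Real.sqrt (2 * π)) * rexp (-t ^ 2 / 2)
      = 2 * ((Real.sqrt (2 * π))⁻¹ * t⁻¹ * rexp (-t ^ 2 / 2)) := by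
    field_simp
  rw [h4]
  nlinarith [Real.exp_pos (-t ^ 2 / 2)]

end Stmt10Aux

open MeasureTheory ProbabilityTheory

set_option maxHeartbeats 1000000 in
/-- let `π` be supported on finitely many points `x₁ < ⋯ < x_s` (`s ≥ 2`)
in `[-M, M]`, `δ` half the minimal gap, `Θ ~ π` and `G ~ N(0,1)` independent,
`Y = Θ + β⁻¹ G`, and `Θ̂(y)` a nearest point of the support to `y`.  Then
`E[(Θ - Θ̂(Y))²] ≤ (16M²/(δβ√(2π))) e^{-δ²β²/8}`, and consequently
`E[Var(Θ | β²Θ + βG)] = E[(Θ - E[Θ | β²Θ + βG])²]` obeys the same bound. -/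
theorem stmt10 (s : ℕ) (hs : 2 ≤ s) (x : Fin s → ℝ) (hmono : StrictMono x)
    (M : ℝ) (hM : ∀ i, |x i| ≤ M)
    (π : Measure ℝ) [IsProbabilityMeasure π] (hsupp : π (Set.range x) = 1)
    (δ : ℝ) (hδ : δ = sInf {d : ℝ | ∃ i j : Fin s, i ≠ j ∧ d = |x i - x j|} / 2)
    (That : ℝ → ℝ)
    (hThat : ∀ y : ℝ, That y ∈ Set.range x ∧ ∀ i, |That y - y| ≤ |x i - y|)
    (β : ℝ) (hβ : 0 < β) :
    (∫ ω : ℝ × ℝ, (ω.1 - That (ω.1 + β⁻¹ * ω.2)) ^ 2 ∂(π.prod (gaussianReal 0 1)))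
        ≤ 16 * M ^ 2 / (δ * β * Real.sqrt (2 * Real.pi)) * Real.exp (-δ ^ 2 * β ^ 2 / 8) ∧
    (∫ ω : ℝ × ℝ,
        (ω.1 - (MeasureTheory.condExp
            (MeasurableSpace.comap (fun ω : ℝ × ℝ => β ^ 2 * ω.1 + β * ω.2) inferInstance)
            (π.prod (gaussianReal 0 1)) (fun ω : ℝ × ℝ => ω.1)) ω) ^ 2
        ∂(π.prod (gaussianReal 0 1)))
        ≤ 16 * M ^ 2 / (δ * β * Real.sqrt (2 * Real.pi)) * Real.exp (-δ ^ 2 * β ^ 2 / 8) := by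
  classical
  have hs0 : 0 < s := by omega
  have hs1 : 1 < s := by omega
  have hM0 : 0 ≤ M := le_trans (abs_nonneg _) (hM ⟨0, hs0⟩)
  -- δ is positive and half the minimal gap
  have hDfin : {d : ℝ | ∃ i j : Fin s, i ≠ j ∧ d = |x i - x j|}.Finite := by
    refine Set.Finite.subset (Set.finite_range (fun p : Fin s × Fin s => |x p.1 - x p.2|)) ?_
    rintro d ⟨i, j, -, rfl⟩; exact ⟨(i, j), rfl⟩
  have hDne : {d : ℝ | ∃ i j : Fin s, i ≠ j ∧ d = |x i - x j|}.Nonempty := by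
    refine ⟨|x ⟨0, hs0⟩ - x ⟨1, hs1⟩|, ⟨0, hs0⟩, ⟨1, hs1⟩, ?_, rfl⟩
    intro h
    have := congrArg Fin.val h
    simp at this
  have hDpos : ∀ d ∈ {d : ℝ | ∃ i j : Fin s, i ≠ j ∧ d = |x i - x j|}, 0 < d := by
    rintro d ⟨i, j, hij, rfl⟩
    exact abs_pos.2 (sub_ne_zero.2 fun h => hij (hmono.injective h))
  have hδpos : 0 < δ := by
    rw [hδ]
    have := hDpos _ (hDne.csInf_mem hDfin)
    linarith
  have hgap : ∀ i j : Fin s, i ≠ j → 2 * δ ≤ |x i - x j| := by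
    intro i j hij
    rw [hδ]
    have : sInf {d : ℝ | ∃ i j : Fin s, i ≠ j ∧ d = |x i - x j|} ≤ |x i - x j| :=
      csInf_le hDfin.bddBelow ⟨i, j, hij, rfl⟩
    linarith
  -- the key pointwise property of nearest-point maps
  have hkey : ∀ F : ℝ → ℝ, (∀ y, F y ∈ Set.range x ∧ ∀ i, |F y - y| ≤ |x i - y|) →
      ∀ θ ∈ Set.range x, ∀ g : ℝ, |β⁻¹ * g| < δ → F (θ + β⁻¹ * g) = θ := by
    intro F hF θ hθ g hg
    obtain ⟨k, rfl⟩ := hθ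
    have habs : |x k - (x k + β⁻¹ * g)| = |β⁻¹ * g| := by
      rw [show x k - (x k + β⁻¹ * g) = -(β⁻¹ * g) by ring, abs_neg]
    have h1 : |F (x k + β⁻¹ * g) - (x k + β⁻¹ * g)| < δ :=
      lt_of_le_of_lt ((hF _).2 k) (habs ▸ hg)
    obtain ⟨j, hj⟩ := (hF (x k + β⁻¹ * g)).1
    by_cases hjk : j = k
    · rw [← hj, hjk]
    · exfalso
      have h2 := hgap j k hjk
      have h3 : |x j - x k| ≤ |x j - (x k + β⁻¹ * g)| + |(x k + β⁻¹ * g) - x k| := by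
        have := abs_sub_le (x j) (x k + β⁻¹ * g) (x k)
        linarith
    
      have h4 : |x j - (x k + β⁻¹ * g)| < δ := by rw [hj]; exact h1
      have h5 : |(x k + β⁻¹ * g) - x k| < δ := by
        rw [show x k + β⁻¹ * g - x k = β⁻¹ * g by ring]; exact hg
      linarith
  -- a.e. the first coordinate lies in the support
  have hone : π (Set.range x)ᶜ = 0 := by
    rw [measure_compl (Set.finite_range x).measurableSet (measure_ne_top _ _), hsupp,
      measure_univ, tsub_self]
  have hrange_ae : ∀ᵐ ω : ℝ × ℝ ∂(π.prod (gaussianReal 0 1)), ω.1 ∈ Set.range x := by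
    rw [ae_iff]
    have hset : {ω : ℝ × ℝ | ¬ ω.1 ∈ Set.range x} = (Set.range x)ᶜ ×ˢ (Set.univ : Set ℝ) := by
      ext ω; simp
    rw [hset, Measure.prod_prod, hone, zero_mul]
  -- the main integral bound, for an arbitrary nearest-point selector
  have hTmeas : MeasurableSet {ω : ℝ × ℝ | δ * β ≤ |ω.2|} :=
    measurableSet_le measurable_const measurable_snd.abs
  have hbound : ∀ F : ℝ → ℝ, (∀ y, F y ∈ Set.range x ∧ ∀ i, |F y - y| ≤ |x i - y|) →
      (∫ ω : ℝ × ℝ, (ω.1 - F (ω.1 + β⁻¹ * ω.2)) ^ 2 ∂(π.prod (gaussianReal 0 1)))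
        ≤ 16 * M ^ 2 / (δ * β * Real.sqrt (2 * Real.pi)) * Real.exp (-δ ^ 2 * β ^ 2 / 8) := by
    intro F hF
    have hBint : Integrable
        (Set.indicator {ω : ℝ × ℝ | δ * β ≤ |ω.2|} (fun _ => 4 * M ^ 2))
        (π.prod (gaussianReal 0 1)) := (integrable_const _).indicator hTmeas
    have hle : ∀ᵐ ω : ℝ × ℝ ∂(π.prod (gaussianReal 0 1)),
        (ω.1 - F (ω.1 + β⁻¹ * ω.2)) ^ 2
          ≤ Set.indicator {ω : ℝ × ℝ | δ * β ≤ |ω.2|} (fun _ => 4 * M ^ 2) ω := by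
      filter_upwards [hrange_ae] with ω hω
      by_cases hcase : δ * β ≤ |ω.2|
      · rw [Set.indicator_of_mem (show ω ∈ {ω : ℝ × ℝ | δ * β ≤ |ω.2|} from hcase)]
        obtain ⟨i, hx1⟩ := hω
        obtain ⟨j, hx2⟩ := (hF (ω.1 + β⁻¹ * ω.2)).1
        have h1 : |ω.1| ≤ M := hx1 ▸ hM i
        have h2 : |F (ω.1 + β⁻¹ * ω.2)| ≤ M := hx2 ▸ hM j
        have h3 : |ω.1 - F (ω.1 + β⁻¹ * ω.2)| ≤ 2 * M := by
          have := abs_sub (ω.1) (F (ω.1 + β⁻¹ * ω.2))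
          linarith
      
        have h4 := abs_le.mp h3
        nlinarith [h4.1, h4.2]
      · rw [Set.indicator_of_notMem (show ω ∉ {ω : ℝ × ℝ | δ * β ≤ |ω.2|} from hcase)]
        push_neg at hcase
        have hsmall : |β⁻¹ * ω.2| < δ := by
          rw [abs_mul, abs_of_pos (inv_pos.2 hβ)]
          have h6 : β⁻¹ * |ω.2| < β⁻¹ * (δ * β) := mul_lt_mul_of_pos_left hcase (inv_pos.2 hβ)
          have h7 : β⁻¹ * (δ * β) = δ := by field_simp
          linarith [h7 ▸ h6]
        rw [hkey F hF ω.1 hω ω.2 hsmall, sub_self]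
        simp
    refine (integral_mono_of_nonneg (Filter.Eventually.of_forall fun ω => sq_nonneg _)
      hBint hle).trans ?_
    rw [integral_indicator_const _ hTmeas]
    have hSeq : {ω : ℝ × ℝ | δ * β ≤ |ω.2|}
        = (Set.univ : Set ℝ) ×ˢ {y : ℝ | δ * β ≤ |y|} := by
      ext ω; simp
    rw [hSeq, measureReal_def, Measure.prod_prod, measure_univ, one_mul, smul_eq_mul]
    have hδβ : 0 < δ * β := by positivity
    have htail := Stmt10Aux.gaussian_abs_tail hδβ
    have hsqrt : 0 < Real.sqrt (2 * Real.pi) := Real.sqrt_pos.2 (by positivity)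
    have hT0 : 0 ≤ ((gaussianReal 0 1) {y : ℝ | δ * β ≤ |y|}).toReal := ENNReal.toReal_nonneg
    have hexp : Real.exp (-(δ * β) ^ 2 / 2) ≤ Real.exp (-δ ^ 2 * β ^ 2 / 8) := by
      apply Real.exp_le_exp.2
      nlinarith [sq_nonneg (δ * β)]
    have hA : 0 < δ * β * Real.sqrt (2 * Real.pi) := by positivity
    calc ((gaussianReal 0 1) {y : ℝ | δ * β ≤ |y|}).toReal * (4 * M ^ 2)
        ≤ (2 / (δ * β * Real.sqrt (2 * Real.pi)) * Real.exp (-(δ * β) ^ 2 / 2)) * (4 * M ^ 2) :=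
          mul_le_mul_of_nonneg_right htail (by positivity)
      _ ≤ (2 / (δ * β * Real.sqrt (2 * Real.pi)) * Real.exp (-δ ^ 2 * β ^ 2 / 8)) * (4 * M ^ 2) := by
          refine mul_le_mul_of_nonneg_right (mul_le_mul_of_nonneg_left hexp (by positivity))
            (by positivity)
      _ ≤ 16 * M ^ 2 / (δ * β * Real.sqrt (2 * Real.pi)) * Real.exp (-δ ^ 2 * β ^ 2 / 8) := by
          set A := δ * β * Real.sqrt (2 * Real.pi) with hAdef
          set e := Real.exp (-δ ^ 2 * β ^ 2 / 8) with hedef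
          have he : 0 < e := Real.exp_pos _
          have hdiff : 16 * M ^ 2 / A * e - 2 / A * e * (4 * M ^ 2) = 8 * M ^ 2 * e / A := by
            ring
          have hpos : 0 ≤ 8 * M ^ 2 * e / A := by positivity
          linarith
  refine ⟨hbound That hThat, ?_⟩
  -- Part 2: the conditional expectation minimizes the L² error
  set μ := π.prod (gaussianReal 0 1) with hμdef
  set Z : ℝ × ℝ → ℝ := fun ω => β ^ 2 * ω.1 + β * ω.2 with hZdef
  set m : MeasurableSpace (ℝ × ℝ) := MeasurableSpace.comap Z inferInstance with hmdef
  set f : ℝ × ℝ → ℝ := fun ω => ω.1 with hfdef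
  have hZmeas : Measurable[Prod.instMeasurableSpace] Z := by
    rw [hZdef]
    exact (measurable_fst.const_mul _).add (measurable_snd.const_mul _)
  have hm : m ≤ (Prod.instMeasurableSpace : MeasurableSpace (ℝ × ℝ)) :=
    measurable_iff_comap_le.mp hZmeas
  haveI hfin : IsFiniteMeasure (μ.trim hm) := isFiniteMeasure_trim hm
  haveI hsf : SigmaFinite (μ.trim hm) := inferInstance
  set E : ℝ × ℝ → ℝ := MeasureTheory.condExp m μ f with hEdef
  -- the measurable nearest-point selector
  set N : ℝ → ℝ := Stmt10Aux.near x hs0 with hNdef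
  have hNprop : ∀ y, N y ∈ Set.range x ∧ ∀ i, |N y - y| ≤ |x i - y| :=
    fun y => ⟨Stmt10Aux.near_mem x hs0 y, Stmt10Aux.near_le x hs0 y⟩
  set g : ℝ × ℝ → ℝ := fun ω => N (Z ω / β ^ 2) with hgdef
  have hgeq : ∀ ω : ℝ × ℝ, g ω = N (ω.1 + β⁻¹ * ω.2) := by
    intro ω
    simp only [hgdef, hZdef]
    congr 1
    field_simp
  have hgm : Measurable[m] g := by
    have h1 : Measurable[m] Z := measurable_iff_comap_le.mpr le_rfl
    exact ((Stmt10Aux.measurable_near x hs0).comp (measurable_id.div_const _)).comp h1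
  have hgmeas : Measurable[Prod.instMeasurableSpace] g := hgm.mono hm le_rfl
  -- boundedness and integrability
  have hfmeas : Measurable[Prod.instMeasurableSpace] f := measurable_fst
  have hfb : ∀ᵐ ω ∂μ, |f ω| ≤ M := by
    filter_upwards [hrange_ae] with ω hω
    obtain ⟨i, hi⟩ := hω
    show |ω.1| ≤ M
    exact hi ▸ hM i
  have hfint : Integrable f μ := by
    refine Integrable.mono' (integrable_const M) hfmeas.aestronglyMeasurable ?_
    simpa [Real.norm_eq_abs] using hfb
  have hEsm : StronglyMeasurable[m] E := stronglyMeasurable_condExp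
  have hEmeas : AEStronglyMeasurable[Prod.instMeasurableSpace] E μ := (hEsm.mono hm).aestronglyMeasurable
  have hEint : Integrable E μ := integrable_condExp
  have hEb : ∀ᵐ ω ∂μ, |E ω| ≤ M := by
    have hup : E ≤ᵐ[μ] fun _ => M := by
      have h1 : f ≤ᵐ[μ] fun _ => M := hfb.mono fun ω h => (abs_le.mp h).2
      have h2 := condExp_mono (m := m) hfint (integrable_const M) h1
      rwa [condExp_const hm] at h2
    have hdn : (fun _ : ℝ × ℝ => -M) ≤ᵐ[μ] E := by
      have h1 : (fun _ : ℝ × ℝ => -M) ≤ᵐ[μ] f := hfb.mono fun ω h => (abs_le.mp h).1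
      have h2 := condExp_mono (m := m) (integrable_const (-M)) hfint h1
      rwa [condExp_const hm] at h2
    filter_upwards [hup, hdn] with ω h1 h2
    exact abs_le.mpr ⟨h2, h1⟩
  have hgb : ∀ ω, |g ω| ≤ M := by
    intro ω
    obtain ⟨i, hi⟩ := (hNprop (Z ω / β ^ 2)).1
    show |N (Z ω / β ^ 2)| ≤ M
    exact hi ▸ hM i
  have hgint : Integrable g μ := by
    refine Integrable.mono' (integrable_const M) hgmeas.aestronglyMeasurable ?_
    exact Filter.Eventually.of_forall fun ω => by simpa [Real.norm_eq_abs] using hgb ω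
  -- a generic integrability fact for products of bounded functions
  have hprod : ∀ (u v : ℝ × ℝ → ℝ), AEStronglyMeasurable[Prod.instMeasurableSpace] u μ → AEStronglyMeasurable[Prod.instMeasurableSpace] v μ →
      (∀ᵐ ω ∂μ, |u ω| ≤ 2 * M) → (∀ᵐ ω ∂μ, |v ω| ≤ 2 * M) →
      Integrable (fun ω => u ω * v ω) μ := by
    intro u v hu hv hub hvb
    refine Integrable.mono' (integrable_const ((2 * M) * (2 * M))) (hu.mul hv) ?_
    filter_upwards [hub, hvb] with ω h1 h2
    rw [Real.norm_eq_abs, abs_mul]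
    exact mul_le_mul h1 h2 (abs_nonneg _) (by linarith)
  set h : ℝ × ℝ → ℝ := fun ω => E ω - g ω with hhdef
  have hhsm : StronglyMeasurable[m] h := hEsm.sub hgm.stronglyMeasurable
  have hhmeas : AEStronglyMeasurable[Prod.instMeasurableSpace] h μ := (hhsm.mono hm).aestronglyMeasurable
  have hhb : ∀ᵐ ω ∂μ, |h ω| ≤ 2 * M := by
    filter_upwards [hEb] with ω h1
    have := hgb ω
    simp only [hhdef]
    have := abs_sub (E ω) (g ω)
    linarith [abs_sub (E ω) (g ω), hgb ω]
  have hfEb : ∀ᵐ ω ∂μ, |f ω - E ω| ≤ 2 * M := by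
    filter_upwards [hfb, hEb] with ω h1 h2
    have := abs_sub (f ω) (E ω)
    linarith
  have hfEmeas : AEStronglyMeasurable[Prod.instMeasurableSpace] (fun ω => f ω - E ω) μ :=
    hfmeas.aestronglyMeasurable.sub hEmeas
  -- cross term vanishes
  have hhf_int : Integrable (h * f) μ := by
    have := hprod h f hhmeas hfmeas.aestronglyMeasurable hhb
      (hfb.mono fun ω h1 => by linarith)
    exact this
  have hmul := condExp_stronglyMeasurable_mul_of_bound hm hhsm hfint (2 * M)
    (by simpa [Real.norm_eq_abs] using hhb)
  have hcross0 : ∫ ω, h ω * f ω ∂μ = ∫ ω, h ω * E ω ∂μ := by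
    calc ∫ ω, h ω * f ω ∂μ = ∫ ω, (h * f) ω ∂μ := by rfl
      _ = ∫ ω, (μ[h * f|m]) ω ∂μ := (integral_condExp hm).symm
      _ = ∫ ω, (h * μ[f|m]) ω ∂μ := integral_congr_ae hmul
      _ = ∫ ω, h ω * E ω ∂μ := by rfl
  have hcross : ∫ ω, (f ω - E ω) * h ω ∂μ = 0 := by
    have heq : ∀ ω, (f ω - E ω) * h ω = h ω * f ω - h ω * E ω := fun ω => by ring
    have hint1 : Integrable (fun ω => h ω * f ω) μ := hhf_int
    have hint2 : Integrable (fun ω => h ω * E ω) μ :=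
      hprod h E hhmeas hEmeas hhb (hEb.mono fun ω h1 => by linarith)
    simp_rw [heq]
    rw [integral_sub hint1 hint2, hcross0, sub_self]
  -- expansion
  have hint_sq1 : Integrable (fun ω => (f ω - E ω) ^ 2) μ := by
    have := hprod _ _ hfEmeas hfEmeas hfEb hfEb
    simpa [pow_two] using this
  have hint_cross : Integrable (fun ω => (f ω - E ω) * h ω) μ :=
    hprod _ _ hfEmeas hhmeas hfEb hhb
  have hint_sq2 : Integrable (fun ω => h ω ^ 2) μ := by
    have := hprod _ _ hhmeas hhmeas hhb hhb
    simpa [pow_two] using this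
  have hexpand : ∀ ω, (f ω - g ω) ^ 2
      = (f ω - E ω) ^ 2 + (2 * ((f ω - E ω) * h ω) + h ω ^ 2) := by
    intro ω
    simp only [hhdef]
    ring
  have hsplit : ∫ ω, (f ω - g ω) ^ 2 ∂μ
      = ∫ ω, (f ω - E ω) ^ 2 ∂μ + (2 * ∫ ω, (f ω - E ω) * h ω ∂μ + ∫ ω, h ω ^ 2 ∂μ) := by
    have h1 : ∫ ω, (f ω - g ω) ^ 2 ∂μ
        = ∫ ω, ((f ω - E ω) ^ 2 + (2 * ((f ω - E ω) * h ω) + h ω ^ 2)) ∂μ :=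
      integral_congr_ae (Filter.Eventually.of_forall hexpand)
    have hint_a : Integrable (fun ω => 2 * ((f ω - E ω) * h ω)) μ := hint_cross.const_mul 2
    have hint_b : Integrable (fun ω => 2 * ((f ω - E ω) * h ω) + h ω ^ 2) μ :=
      hint_a.add hint_sq2
    rw [h1, integral_add hint_sq1 hint_b, integral_add hint_a hint_sq2, integral_const_mul]
  have hmin : ∫ ω, (f ω - E ω) ^ 2 ∂μ ≤ ∫ ω, (f ω - g ω) ^ 2 ∂μ := by
    rw [hsplit, hcross]
    have : 0 ≤ ∫ ω, h ω ^ 2 ∂μ := integral_nonneg fun ω => sq_nonneg _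
    linarith
  have hgoal2 : ∫ ω, (f ω - g ω) ^ 2 ∂μ
      ≤ 16 * M ^ 2 / (δ * β * Real.sqrt (2 * Real.pi)) * Real.exp (-δ ^ 2 * β ^ 2 / 8) := by
    have heqi : ∀ ω : ℝ × ℝ, (f ω - g ω) ^ 2 = (ω.1 - N (ω.1 + β⁻¹ * ω.2)) ^ 2 := by
      intro ω
      rw [hgeq ω]
    calc ∫ ω, (f ω - g ω) ^ 2 ∂μ
        = ∫ ω : ℝ × ℝ, (ω.1 - N (ω.1 + β⁻¹ * ω.2)) ^ 2 ∂μ := by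
          exact integral_congr_ae (Filter.Eventually.of_forall heqi)
      _ ≤ _ := hbound N hNprop
  exact hmin.trans hgoal2
end

section
/- Let π_Θ be a probability measure on ℝ with density proportional to e^{-U(θ)} where ‖U''‖_∞ ≤ C < ∞, let t > 0, and let π_{x,t} be the conditional law of Θ given tΘ + √t G = x, where (Θ,G) ~ π_Θ ⊗ N(0,1). Then Var[Θ | tΘ + √t G = x] ≥ 1/(10⁵(C + t)) for all x ∈ ℝ. -/
open MeasureTheory ProbabilityTheory

lemma stmt11_taylor_ub {f f' f'' : ℝ → ℝ} (hf : ∀ y, HasDerivAt f (f' y) y)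
    (hf' : ∀ y, HasDerivAt f' (f'' y) y) {K : ℝ} (hK : ∀ y, f'' y ≤ K) (a θ : ℝ) :
    f θ ≤ f a + f' a * (θ - a) + K / 2 * (θ - a) ^ 2 := by
  set g : ℝ → ℝ := fun y => f a + f' a * (y - a) + K / 2 * (y - a) ^ 2 - f y with hg
  set g' : ℝ → ℝ := fun y => f' a + K * (y - a) - f' y with hg'
  have hdg : ∀ y, HasDerivAt g (g' y) y := by
    intro y
    have h1 : HasDerivAt (fun z : ℝ => f a + f' a * (z - a) + K / 2 * (z - a) ^ 2)
        (f' a + K * (y - a)) y := by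
      have := (((hasDerivAt_id y).sub_const a).pow 2).const_mul (K / 2)
      have h2 := (((hasDerivAt_id y).sub_const a).const_mul (f' a)).const_add (f a)
      refine (h2.add this).congr_deriv ?_
      simp only [id_eq]
      push_cast
      ring
    exact h1.sub (hf y)
  have hdg' : ∀ y, HasDerivAt g' (K - f'' y) y := by
    intro y
    have h1 : HasDerivAt (fun z : ℝ => f' a + K * (z - a)) K y := by
      simpa using (((hasDerivAt_id y).sub_const a).const_mul K).const_add (f' a)
    exact h1.sub (hf' y)
  have hmono : Monotone g' :=
    monotone_of_hasDerivAt_nonneg hdg' (fun y => sub_nonneg.2 (hK y))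
  have hg'a : g' a = 0 := by simp [hg']
  have hga : g a = 0 := by simp [hg]
  have key : 0 ≤ g θ := by
    rcases le_total a θ with h | h
    · have hm : MonotoneOn g (Set.Ici a) := by
        refine monotoneOn_of_deriv_nonneg (convex_Ici a)
          (fun y _ => (hdg y).continuousAt.continuousWithinAt)
          (fun y _ => ((hdg y).differentiableAt).differentiableWithinAt) ?_
        intro y hy
        rw [(hdg y).deriv]
        rw [← hg'a]
        exact hmono (le_of_lt (by simpa using hy))
      have := hm (Set.self_mem_Ici) (by exact h) h
      rwa [hga] at this
    · have hm : AntitoneOn g (Set.Iic a) := by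
        refine antitoneOn_of_deriv_nonpos (convex_Iic a)
          (fun y _ => (hdg y).continuousAt.continuousWithinAt)
          (fun y _ => ((hdg y).differentiableAt).differentiableWithinAt) ?_
        intro y hy
        rw [(hdg y).deriv, ← hg'a]
        exact hmono (le_of_lt (by simpa using hy))
      have := hm (by exact h) (Set.self_mem_Iic) h
      rwa [hga] at this
  have : f θ ≤ f a + f' a * (θ - a) + K / 2 * (θ - a) ^ 2 := by
    have := key
    simp only [hg] at this
    linarith
  exact this

lemma stmt11_density_ub {V V' V'' : ℝ → ℝ} (hV : ∀ y, HasDerivAt V (V' y) y)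
    (hV' : ∀ y, HasDerivAt V' (V'' y) y) {K : ℝ} (hK0 : 0 < K) (hK : ∀ y, V'' y ≤ K)
    (hint : Integrable (fun θ => Real.exp (-V θ)) volume) (θ₀ : ℝ) :
    Real.exp (-V θ₀) ≤ 2 * Real.sqrt K * ∫ θ, Real.exp (-V θ) := by
  have hsK : 0 < Real.sqrt K := Real.sqrt_pos.2 hK0
  set r : ℝ := (Real.sqrt K)⁻¹ with hr
  have hr0 : 0 < r := inv_pos.2 hsK
  have hr2 : r ^ 2 = K⁻¹ := by
    rw [hr, inv_pow, Real.sq_sqrt hK0.le]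
  have key : ∃ c d : ℝ, c ≤ d ∧ d - c = r ∧ ∀ θ ∈ Set.Icc c d, V θ ≤ V θ₀ + 1 / 2 := by
    have taylor := stmt11_taylor_ub hV hV' hK θ₀
    rcases le_total 0 (V' θ₀) with hs | hs
    · refine ⟨θ₀ - r, θ₀, by linarith, by ring, fun θ hθ => ?_⟩
      have h1 : V' θ₀ * (θ - θ₀) ≤ 0 :=
        mul_nonpos_of_nonneg_of_nonpos hs (by linarith [hθ.2])
      have h2 : (θ - θ₀) ^ 2 ≤ r ^ 2 := by
        have habs : |θ - θ₀| ≤ r := abs_le.2 ⟨by linarith [hθ.1], by linarith [hθ.2]⟩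
        calc (θ - θ₀) ^ 2 = |θ - θ₀| ^ 2 := (sq_abs _).symm
          _ ≤ r ^ 2 := pow_le_pow_left₀ (abs_nonneg _) habs 2
      have h3 : K / 2 * (θ - θ₀) ^ 2 ≤ 1 / 2 := by
        rw [hr2] at h2
        calc K / 2 * (θ - θ₀) ^ 2 ≤ K / 2 * K⁻¹ :=
              mul_le_mul_of_nonneg_left h2 (by positivity)
          _ = 1 / 2 := by field_simp
      have := taylor θ
      linarith
    · refine ⟨θ₀, θ₀ + r, by linarith, by ring, fun θ hθ => ?_⟩
      have h1 : V' θ₀ * (θ - θ₀) ≤ 0 :=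
        mul_nonpos_of_nonpos_of_nonneg hs (by linarith [hθ.1])
      have h2 : (θ - θ₀) ^ 2 ≤ r ^ 2 := by
        have habs : |θ - θ₀| ≤ r := abs_le.2 ⟨by linarith [hθ.1], by linarith [hθ.2]⟩
        calc (θ - θ₀) ^ 2 = |θ - θ₀| ^ 2 := (sq_abs _).symm
          _ ≤ r ^ 2 := pow_le_pow_left₀ (abs_nonneg _) habs 2
      have h3 : K / 2 * (θ - θ₀) ^ 2 ≤ 1 / 2 := by
        rw [hr2] at h2
        calc K / 2 * (θ - θ₀) ^ 2 ≤ K / 2 * K⁻¹ :=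
              mul_le_mul_of_nonneg_left h2 (by positivity)
          _ = 1 / 2 := by field_simp
      have := taylor θ
      linarith
  obtain ⟨c, d, hcd, hdc, hub⟩ := key
  have hZnn : 0 ≤ ∫ θ, Real.exp (-V θ) := integral_nonneg fun θ => (Real.exp_pos _).le
  have h1 : ∫ θ in Set.Icc c d, Real.exp (-V θ) ≤ ∫ θ, Real.exp (-V θ) :=
    setIntegral_le_integral hint (Filter.Eventually.of_forall fun θ => (Real.exp_pos _).le)
  have h2 : r * Real.exp (-V θ₀ - 1 / 2) ≤ ∫ θ in Set.Icc c d, Real.exp (-V θ) := by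
    have hmono : ∫ θ in Set.Icc c d, Real.exp (-V θ₀ - 1 / 2) ≤
        ∫ θ in Set.Icc c d, Real.exp (-V θ) := by
      refine setIntegral_mono_on
        (integrableOn_const (by rw [Real.volume_Icc]; exact ENNReal.ofReal_ne_top))
        hint.integrableOn measurableSet_Icc (fun θ hθ => ?_)
      exact Real.exp_le_exp.2 (by have := hub θ hθ; linarith)
    have hconst : ∫ θ in Set.Icc c d, Real.exp (-V θ₀ - 1 / 2) =
        r * Real.exp (-V θ₀ - 1 / 2) := by
      rw [setIntegral_const, measureReal_def, Real.volume_Icc, ENNReal.toReal_ofReal (by linarith), hdc,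
        smul_eq_mul]
    linarith [hmono, hconst]
  have hZ : r * Real.exp (-V θ₀ - 1 / 2) ≤ ∫ θ, Real.exp (-V θ) := le_trans h2 h1
  have hexphalf : Real.exp (1 / 2) ≤ 2 := by
    rw [Real.exp_half]
    rw [show (2:ℝ) = Real.sqrt 4 by
      rw [show (4:ℝ) = 2^2 by norm_num, Real.sqrt_sq (by norm_num : (0:ℝ) ≤ 2)]]
    exact Real.sqrt_le_sqrt (le_trans Real.exp_one_lt_d9.le (by norm_num))
  have hsplit : Real.exp (-V θ₀) = Real.exp (-V θ₀ - 1 / 2) * Real.exp (1 / 2) := by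
    rw [← Real.exp_add]; ring_nf
  rw [hsplit]
  have hstep : Real.exp (-V θ₀ - 1 / 2) ≤ Real.sqrt K * ∫ θ, Real.exp (-V θ) := by
    have h' := hZ
    rw [hr] at h'
    calc Real.exp (-V θ₀ - 1 / 2)
        = Real.sqrt K * ((Real.sqrt K)⁻¹ * Real.exp (-V θ₀ - 1/2)) := by field_simp
      _ ≤ Real.sqrt K * ∫ θ, Real.exp (-V θ) := mul_le_mul_of_nonneg_left h' hsK.le
  calc Real.exp (-V θ₀ - 1 / 2) * Real.exp (1 / 2)
      ≤ (Real.sqrt K * ∫ θ, Real.exp (-V θ)) * 2 :=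
        mul_le_mul hstep hexphalf (Real.exp_pos _).le (mul_nonneg hsK.le hZnn)
    _ = 2 * Real.sqrt K * ∫ θ, Real.exp (-V θ) := by ring

/-- let `π_Θ(dθ) ∝ e^{-U(θ)} dθ` with `‖U''‖_∞ ≤ C`, and let
`π_{x,t}(dθ) ∝ e^{-U(θ) + xθ - tθ²/2} dθ` be the posterior of `Θ` given
`tΘ + √t G = x`.  Then for every `x`, `Var[Θ | tΘ + √t G = x] ≥ 1/(10⁵(C + t))`. -/
theorem stmt11 (U : ℝ → ℝ) (hU : ContDiff ℝ 2 U) (C : ℝ) (hC0 : 0 ≤ C)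
    (hC : ∀ x, |deriv (deriv U) x| ≤ C)
    (π : Measure ℝ)
    (hπdef : π = volume.withDensity fun θ => ENNReal.ofReal (Real.exp (-U θ)))
    [IsProbabilityMeasure π] (t : ℝ) (ht : 0 < t) :
    ∀ x : ℝ,
      1 / (10 ^ 5 * (C + t)) ≤
        ProbabilityTheory.variance (fun θ => θ)
          ((((π.withDensity fun θ =>
                ENNReal.ofReal (Real.exp (x * θ - t * θ ^ 2 / 2))) Set.univ)⁻¹) •
            π.withDensity fun θ => ENNReal.ofReal (Real.exp (x * θ - t * θ ^ 2 / 2))) := by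
  intro x
  have hK0 : 0 < C + t := by linarith
  set K : ℝ := C + t with hKdef
  have hsK : 0 < Real.sqrt K := Real.sqrt_pos.2 hK0
  -- differentiability facts
  have hU2 := (contDiff_succ_iff_deriv (n := 1)).mp (by
    rw [show ((1 : WithTop ℕ∞) + 1) = 2 by norm_num]; exact hU)
  have hUdiff : Differentiable ℝ U := hU2.1
  have hU'diff : Differentiable ℝ (deriv U) := hU2.2.2.differentiable one_ne_zero
  set V : ℝ → ℝ := fun θ => U θ + (t * θ ^ 2 / 2 - x * θ) with hVdef
  set V' : ℝ → ℝ := fun θ => deriv U θ + (t * θ - x) with hV'def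
  set V'' : ℝ → ℝ := fun θ => deriv (deriv U) θ + t with hV''def
  have hdV : ∀ y, HasDerivAt V (V' y) y := by
    intro y
    have hp : HasDerivAt (fun θ : ℝ => θ ^ 2) (2 * y) y := by
      simpa using hasDerivAt_pow 2 y
    have h1 : HasDerivAt (fun θ : ℝ => t * θ ^ 2 / 2 - x * θ) (t * y - x) y := by
      have h2 := ((hp.const_mul t).div_const 2).sub ((hasDerivAt_id y).const_mul x)
      refine h2.congr_deriv ?_
      ring
    exact (hUdiff y).hasDerivAt.add h1
  have hdV' : ∀ y, HasDerivAt V' (V'' y) y := by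
    intro y
    have h1 : HasDerivAt (fun θ : ℝ => t * θ - x) t y := by
      simpa using ((hasDerivAt_id y).const_mul t).sub_const x
    exact (hU'diff y).hasDerivAt.add h1
  have hV''le : ∀ y, V'' y ≤ K := by
    intro y
    have := (abs_le.mp (hC y)).2
    simp only [hV''def, hKdef]
    linarith
  -- continuity / measurability
  have hVcont : Continuous V := by
    apply hUdiff.continuous.add
    continuity
  have hcontU : Continuous fun θ => Real.exp (-U θ) := hUdiff.continuous.neg.rexp
  have hmeasU : Measurable fun θ => ENNReal.ofReal (Real.exp (-U θ)) :=
    ENNReal.measurable_ofReal.comp hcontU.measurable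
  have hcontρ : Continuous fun θ : ℝ => Real.exp (x * θ - t * θ ^ 2 / 2) := by continuity
  have hmeasρ : Measurable fun θ : ℝ => ENNReal.ofReal (Real.exp (x * θ - t * θ ^ 2 / 2)) :=
    ENNReal.measurable_ofReal.comp hcontρ.measurable
  have hmeasV : Measurable fun θ => ENNReal.ofReal (Real.exp (-V θ)) :=
    ENNReal.measurable_ofReal.comp (hVcont.neg.rexp.measurable)
  -- rewrite the measure
  have hν : (π.withDensity fun θ => ENNReal.ofReal (Real.exp (x * θ - t * θ ^ 2 / 2)))
      = volume.withDensity fun θ => ENNReal.ofReal (Real.exp (-V θ)) := by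
    rw [hπdef, ← withDensity_mul _ hmeasU hmeasρ]
    congr 1
    funext θ
    rw [Pi.mul_apply, ← ENNReal.ofReal_mul (Real.exp_pos _).le, ← Real.exp_add]
    congr 1
    simp only [hVdef]
    ring
  -- integrability of exp(-U)
  have hU_lint : ∫⁻ θ, ENNReal.ofReal (Real.exp (-U θ)) = 1 := by
    have h := measure_univ (μ := π)
    rwa [hπdef, withDensity_apply _ MeasurableSet.univ, Measure.restrict_univ] at h
  have hUint : Integrable (fun θ => Real.exp (-U θ)) volume := by
    refine ⟨hcontU.aestronglyMeasurable, ?_⟩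
    rw [hasFiniteIntegral_iff_ofReal (Filter.Eventually.of_forall fun θ => (Real.exp_pos _).le),
      hU_lint]
    exact ENNReal.one_lt_top
  -- pointwise bounds
  have hρ_le : ∀ θ : ℝ, x * θ - t * θ ^ 2 / 2 ≤ x ^ 2 / (2 * t) := by
    intro θ
    rw [le_div_iff₀ (by positivity : (0:ℝ) < 2 * t)]
    nlinarith [sq_nonneg (x - t * θ)]
  have hVint : Integrable (fun θ => Real.exp (-V θ)) volume := by
    refine Integrable.mono' (hUint.const_mul (Real.exp (x ^ 2 / (2 * t))))
      hVcont.neg.rexp.aestronglyMeasurable (Filter.Eventually.of_forall fun θ => ?_)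
    rw [Real.norm_eq_abs, Real.abs_exp]
    have hsplit : -V θ = -U θ + (x * θ - t * θ ^ 2 / 2) := by simp only [hVdef]; ring
    rw [hsplit, Real.exp_add]
    calc Real.exp (-U θ) * Real.exp (x * θ - t * θ ^ 2 / 2)
        ≤ Real.exp (-U θ) * Real.exp (x ^ 2 / (2 * t)) :=
          mul_le_mul_of_nonneg_left (Real.exp_le_exp.2 (hρ_le θ)) (Real.exp_pos _).le
      _ = Real.exp (x ^ 2 / (2 * t)) * Real.exp (-U θ) := mul_comm _ _
  have hsq_le : ∀ θ : ℝ, θ ^ 2 * Real.exp (x * θ - t * θ ^ 2 / 2)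
      ≤ 4 / t * Real.exp (x ^ 2 / t) := by
    intro θ
    have e0 : t * θ ^ 2 / 4 ≤ Real.exp (t * θ ^ 2 / 4) := by
      have := Real.add_one_le_exp (t * θ ^ 2 / 4)
      linarith
    have e1 : θ ^ 2 ≤ 4 / t * Real.exp (t * θ ^ 2 / 4) := by
      have h := mul_le_mul_of_nonneg_left e0 (le_of_lt (by positivity : (0:ℝ) < 4 / t))
      calc θ ^ 2 = 4 / t * (t * θ ^ 2 / 4) := by field_simp
        _ ≤ 4 / t * Real.exp (t * θ ^ 2 / 4) := h
    have e2 : x * θ - t * θ ^ 2 / 2 ≤ x ^ 2 / t - t * θ ^ 2 / 4 := by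
      have h' : x * θ - t * θ ^ 2 / 2 + t * θ ^ 2 / 4 ≤ x ^ 2 / t := by
        rw [le_div_iff₀ ht]
        nlinarith [sq_nonneg (x - t * θ / 2)]
      linarith
    calc θ ^ 2 * Real.exp (x * θ - t * θ ^ 2 / 2)
        ≤ (4 / t * Real.exp (t * θ ^ 2 / 4)) * Real.exp (x ^ 2 / t - t * θ ^ 2 / 4) :=
          mul_le_mul e1 (Real.exp_le_exp.2 e2) (Real.exp_pos _).le (by positivity)
      _ = 4 / t * Real.exp (x ^ 2 / t) := by
          rw [mul_assoc, ← Real.exp_add]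
          congr 2
          ring
  have hV2int : Integrable (fun θ => θ ^ 2 * Real.exp (-V θ)) volume := by
    refine Integrable.mono' (hUint.const_mul (4 / t * Real.exp (x ^ 2 / t)))
      ((continuous_pow 2).mul hVcont.neg.rexp).aestronglyMeasurable
      (Filter.Eventually.of_forall fun θ => ?_)
    have hsplit : -V θ = -U θ + (x * θ - t * θ ^ 2 / 2) := by simp only [hVdef]; ring
    rw [Real.norm_eq_abs, abs_mul, Real.abs_exp, abs_pow, sq_abs, hsplit, Real.exp_add]
    calc θ ^ 2 * (Real.exp (-U θ) * Real.exp (x * θ - t * θ ^ 2 / 2))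
        = (θ ^ 2 * Real.exp (x * θ - t * θ ^ 2 / 2)) * Real.exp (-U θ) := by ring
      _ ≤ (4 / t * Real.exp (x ^ 2 / t)) * Real.exp (-U θ) :=
          mul_le_mul_of_nonneg_right (hsq_le θ) (Real.exp_pos _).le
  -- normalization constant
  set Z : ℝ := ∫ θ, Real.exp (-V θ) with hZdef
  have hdens : ∀ θ₀, Real.exp (-V θ₀) ≤ 2 * Real.sqrt K * Z :=
    stmt11_density_ub hdV hdV' hK0 hV''le hVint
  have hZpos : 0 < Z := by nlinarith [hdens 0, Real.exp_pos (-V 0), hsK]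
  have hνuniv : (volume.withDensity fun θ => ENNReal.ofReal (Real.exp (-V θ))) Set.univ
      = ENNReal.ofReal Z := by
    rw [withDensity_apply _ MeasurableSet.univ, Measure.restrict_univ,
      ← ofReal_integral_eq_lintegral_ofReal hVint
        (Filter.Eventually.of_forall fun θ => (Real.exp_pos _).le)]
  rw [hν, hνuniv]
  set μ' : Measure ℝ :=
    (ENNReal.ofReal Z)⁻¹ • volume.withDensity fun θ => ENNReal.ofReal (Real.exp (-V θ))
    with hμ'def
  have hZne0 : (ENNReal.ofReal Z) ≠ 0 := ne_of_gt (ENNReal.ofReal_pos.2 hZpos)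
  have hZnetop : (ENNReal.ofReal Z) ≠ ⊤ := ENNReal.ofReal_ne_top
  haveI hprob : IsProbabilityMeasure μ' := by
    constructor
    rw [hμ'def, Measure.smul_apply, hνuniv, smul_eq_mul,
      ENNReal.inv_mul_cancel hZne0 hZnetop]
  -- conversion of integrability
  have hconv : ∀ g : ℝ → ℝ, Integrable (fun θ => g θ * Real.exp (-V θ)) volume →
      Integrable g μ' := by
    intro g hg
    rw [hμ'def, integrable_smul_measure (ENNReal.inv_ne_zero.2 hZnetop)
      (ENNReal.inv_ne_top.2 hZne0),
      integrable_withDensity_iff hmeasV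
        (Filter.Eventually.of_forall fun θ => ENNReal.ofReal_lt_top)]
    refine hg.congr (Filter.Eventually.of_forall fun θ => ?_)
    show g θ * Real.exp (-V θ) = g θ * (ENNReal.ofReal (Real.exp (-V θ))).toReal
    rw [ENNReal.toReal_ofReal (Real.exp_pos _).le]
  have hint_sq : Integrable (fun θ : ℝ => θ ^ 2) μ' := hconv _ hV2int
  have hint_id : Integrable (fun θ : ℝ => θ) μ' := by
    apply hconv
    refine Integrable.mono' (hVint.add hV2int)
      (continuous_id.mul hVcont.neg.rexp).aestronglyMeasurable
      (Filter.Eventually.of_forall fun θ => ?_)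
    rw [Real.norm_eq_abs, abs_mul, Real.abs_exp]
    have habs : |θ| ≤ 1 + θ ^ 2 := by nlinarith [sq_nonneg (|θ| - 1), sq_abs θ]
    calc |θ| * Real.exp (-V θ) ≤ (1 + θ ^ 2) * Real.exp (-V θ) :=
          mul_le_mul_of_nonneg_right habs (Real.exp_pos _).le
      _ = Real.exp (-V θ) + θ ^ 2 * Real.exp (-V θ) := by ring
  have hmem : MemLp (fun θ : ℝ => θ) 2 μ' := by
    exact (memLp_two_iff_integrable_sq (f := fun θ : ℝ => θ)
      measurable_id.aestronglyMeasurable).mpr hint_sq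
  set m : ℝ := ∫ θ, θ ∂μ' with hm
  have hvar : ProbabilityTheory.variance (fun θ : ℝ => θ) μ' = ∫ θ, (θ - m) ^ 2 ∂μ' := by
    rw [variance_eq_integral hmem.aestronglyMeasurable.aemeasurable]
  have hint_c : Integrable (fun θ : ℝ => (θ - m) ^ 2) μ' := by
    have hexp : (fun θ : ℝ => (θ - m) ^ 2) = fun θ => θ ^ 2 - 2 * m * θ + m ^ 2 := by
      funext θ; ring
    rw [hexp]
    exact (hint_sq.sub (hint_id.const_mul (2 * m))).add (integrable_const _)
  set δ : ℝ := 1 / (8 * Real.sqrt K) with hδ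
  have hδ0 : 0 < δ := by positivity
  set s : Set ℝ := (Metric.ball m δ)ᶜ with hs
  have hball : μ' (Metric.ball m δ) ≤ ENNReal.ofReal (1 / 2) := by
    rw [hμ'def, Measure.smul_apply, smul_eq_mul, withDensity_apply _ measurableSet_ball]
    have h1 : ∫⁻ θ in Metric.ball m δ, ENNReal.ofReal (Real.exp (-V θ)) ∂volume
        ≤ ENNReal.ofReal (2 * Real.sqrt K * Z) * volume (Metric.ball m δ) := by
      calc ∫⁻ θ in Metric.ball m δ, ENNReal.ofReal (Real.exp (-V θ)) ∂volume
          ≤ ∫⁻ _ in Metric.ball m δ, ENNReal.ofReal (2 * Real.sqrt K * Z) ∂volume :=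
            lintegral_mono fun θ => ENNReal.ofReal_le_ofReal (hdens θ)
        _ = ENNReal.ofReal (2 * Real.sqrt K * Z) * volume (Metric.ball m δ) :=
            setLIntegral_const _ _
    have h2 : ENNReal.ofReal (2 * Real.sqrt K * Z) * volume (Metric.ball m δ)
        = ENNReal.ofReal Z * ENNReal.ofReal (1 / 2) := by
      rw [Real.volume_ball, ← ENNReal.ofReal_mul (by positivity), ← ENNReal.ofReal_mul hZpos.le]
      congr 1
      rw [hδ]
      field_simp
      ring
    calc (ENNReal.ofReal Z)⁻¹ * ∫⁻ θ in Metric.ball m δ, ENNReal.ofReal (Real.exp (-V θ)) ∂volume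
        ≤ (ENNReal.ofReal Z)⁻¹ * (ENNReal.ofReal Z * ENNReal.ofReal (1 / 2)) := by
          rw [← h2]
          exact mul_le_mul_right h1 _
      _ = ENNReal.ofReal (1 / 2) := by
          rw [← mul_assoc, ENNReal.inv_mul_cancel hZne0 hZnetop, one_mul]
  have hsreal : 1 / 2 ≤ (μ' s).toReal := by
    have hballreal : (μ' (Metric.ball m δ)).toReal ≤ 1 / 2 := by
      have h := ENNReal.toReal_mono ENNReal.ofReal_ne_top hball
      rwa [ENNReal.toReal_ofReal (by norm_num)] at h
    have hcompl : μ' s = 1 - μ' (Metric.ball m δ) := by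
      rw [hs, measure_compl measurableSet_ball (measure_ne_top _ _), measure_univ]
    rw [hcompl, ENNReal.toReal_sub_of_le prob_le_one ENNReal.one_ne_top, ENNReal.toReal_one]
    linarith
  have hlow : (μ' s).toReal * δ ^ 2 ≤ ∫ θ, (θ - m) ^ 2 ∂μ' := by
    have h1 : ∫ θ in s, (θ - m) ^ 2 ∂μ' ≤ ∫ θ, (θ - m) ^ 2 ∂μ' :=
      setIntegral_le_integral hint_c (Filter.Eventually.of_forall fun θ => sq_nonneg _)
    have h2 : ∫ _ in s, δ ^ 2 ∂μ' ≤ ∫ θ in s, (θ - m) ^ 2 ∂μ' := by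
      refine setIntegral_mono_on (integrableOn_const (measure_ne_top _ _))
        hint_c.integrableOn measurableSet_ball.compl (fun θ hθ => ?_)
      have hd : δ ≤ |θ - m| := by
        have hnot : ¬ dist θ m < δ := hθ
        rw [Real.dist_eq] at hnot
        linarith [not_lt.1 hnot]
      calc δ ^ 2 ≤ |θ - m| ^ 2 := pow_le_pow_left₀ hδ0.le hd 2
        _ = (θ - m) ^ 2 := sq_abs _
    have h3 : ∫ _ in s, δ ^ 2 ∂μ' = (μ' s).toReal * δ ^ 2 := by
      rw [setIntegral_const, measureReal_def, smul_eq_mul]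
    linarith
  have hδ2 : δ ^ 2 = 1 / (64 * K) := by
    rw [hδ, div_pow, mul_pow, Real.sq_sqrt hK0.le]
    norm_num
  rw [hvar]
  calc 1 / (10 ^ 5 * K) ≤ 1 / (128 * K) := by
        apply one_div_le_one_div_of_le
        · positivity
        · nlinarith [hK0]
    _ = δ ^ 2 * (1 / 2) := by rw [hδ2]; field_simp; ring
    _ ≤ δ ^ 2 * (μ' s).toReal := mul_le_mul_of_nonneg_left hsreal (sq_nonneg δ)
    _ = (μ' s).toReal * δ ^ 2 := mul_comm _ _
    _ ≤ ∫ θ, (θ - m) ^ 2 ∂μ' := hlow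
end

section
/- In the setting of the previous statement, the function Q(p) = Var[Θ | γΘ + √γ G = Γ_γ^{-1}(p)] is 3M²-Lipschitz continuous in p. -/
open MeasureTheory ProbabilityTheory

/-- Posterior (tilted) law of `Θ ~ π` given `γΘ + √γ G = s`. -/
noncomputable def tilt (π : Measure ℝ) (γ s : ℝ) : Measure ℝ :=
  ((π.withDensity fun θ => ENNReal.ofReal (Real.exp (s * θ - γ * θ ^ 2 / 2))) Set.univ)⁻¹ •
    π.withDensity fun θ => ENNReal.ofReal (Real.exp (s * θ - γ * θ ^ 2 / 2))

/-- Conditional mean `E[Θ | γΘ + √γ G = s]`. -/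
noncomputable def condMean (π : Measure ℝ) (γ s : ℝ) : ℝ := ∫ θ, θ ∂tilt π γ s

/-- Conditional variance `Var[Θ | γΘ + √γ G = s]`. -/
noncomputable def condVar (π : Measure ℝ) (γ s : ℝ) : ℝ :=
  ∫ θ, (θ - condMean π γ s) ^ 2 ∂tilt π γ s

/-- `Γ_γ(h) = ∫₀^h Var[Θ | γΘ + √γ G = s]^{1/2} ds`. -/
noncomputable def Gam (π : Measure ℝ) (γ h : ℝ) : ℝ :=
  ∫ s in (0 : ℝ)..h, Real.sqrt (condVar π γ s)


open scoped NNReal ENNReal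

noncomputable def dens (γ s θ : ℝ) : ℝ := Real.exp (s * θ - γ * θ ^ 2 / 2)

noncomputable def Ak (π : Measure ℝ) (γ : ℝ) (k : ℕ) (s : ℝ) : ℝ :=
  ∫ θ, θ ^ k * dens γ s θ ∂π

lemma dens_pos (γ s θ : ℝ) : 0 < dens γ s θ := Real.exp_pos _

lemma dens_le {γ : ℝ} (hγ : 0 < γ) (s θ : ℝ) : dens γ s θ ≤ Real.exp (s ^ 2 / (2 * γ)) := by
  apply Real.exp_le_exp.2
  rw [le_div_iff₀ (by positivity : (0:ℝ) < 2*γ)]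
  nlinarith [sq_nonneg (γ * θ - s)]

lemma dens_continuous (γ s : ℝ) : Continuous (dens γ s) := by
  unfold dens; fun_prop

lemma ae_mem {M : NNReal} {π : Measure ℝ} [IsProbabilityMeasure π]
    (hsupp : π (Set.Icc (-(M : ℝ)) (M : ℝ)) = 1) :
    ∀ᵐ θ ∂π, |θ| ≤ (M : ℝ) := by
  have h : π (Set.Icc (-(M : ℝ)) (M : ℝ))ᶜ = 0 := by
    rw [measure_compl measurableSet_Icc (measure_ne_top _ _), hsupp, measure_univ, tsub_self]
  filter_upwards [measure_eq_zero_iff_ae_notMem.mp h] with θ hθ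
  have : θ ∈ Set.Icc (-(M : ℝ)) (M : ℝ) := by simpa using hθ
  rw [abs_le]; exact ⟨this.1, this.2⟩

lemma integrable_of_bdd {π : Measure ℝ} [IsProbabilityMeasure π] {g : ℝ → ℝ} {C : ℝ}
    (hm : Measurable g) (hb : ∀ᵐ θ ∂π, ‖g θ‖ ≤ C) : Integrable g π :=
  ⟨hm.aestronglyMeasurable, HasFiniteIntegral.of_bounded hb⟩

lemma integrable_pow_dens {M : NNReal} {π : Measure ℝ} [IsProbabilityMeasure π]
    (hsupp : π (Set.Icc (-(M : ℝ)) (M : ℝ)) = 1) {γ : ℝ} (hγ : 0 < γ) (k : ℕ) (s : ℝ) :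
    Integrable (fun θ => θ ^ k * dens γ s θ) π := by
  apply integrable_of_bdd ((measurable_id.pow_const k).mul (dens_continuous γ s).measurable)
  filter_upwards [ae_mem hsupp] with θ hθ
  simp only [Pi.mul_apply, id_eq]
  rw [Real.norm_eq_abs, abs_mul, abs_pow]
  exact mul_le_mul (pow_le_pow_left₀ (abs_nonneg θ) hθ k)
    (by rw [abs_of_pos (dens_pos _ _ _)]; exact dens_le hγ s θ)
    (abs_nonneg _) (by positivity)

lemma A0_pos {M : NNReal} {π : Measure ℝ} [IsProbabilityMeasure π]
    (hsupp : π (Set.Icc (-(M : ℝ)) (M : ℝ)) = 1) {γ : ℝ} (hγ : 0 < γ) (s : ℝ) :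
    0 < Ak π γ 0 s := by
  have hi : Integrable (fun θ => θ ^ 0 * dens γ s θ) π := integrable_pow_dens hsupp hγ 0 s
  rw [Ak]
  rw [integral_pos_iff_support_of_nonneg (fun θ => le_of_lt (by simpa using dens_pos γ s θ)) hi]
  have : (Function.support fun θ => θ ^ 0 * dens γ s θ) = Set.univ := by
    ext θ; simp [Function.support, (dens_pos γ s θ).ne']
  rw [this, measure_univ]; norm_num


noncomputable def Efun (π : Measure ℝ) (γ s : ℝ) : ℝ :=
  (Ak π γ 0 s)⁻¹ * (Ak π γ 3 s - 3 * condMean π γ s * Ak π γ 2 s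
    + 3 * (condMean π γ s) ^ 2 * Ak π γ 1 s - (condMean π γ s) ^ 3 * Ak π γ 0 s)

lemma tilt_integral {M : NNReal} {π : Measure ℝ} [IsProbabilityMeasure π]
    (hsupp : π (Set.Icc (-(M : ℝ)) (M : ℝ)) = 1) {γ : ℝ} (hγ : 0 < γ) (s : ℝ) (g : ℝ → ℝ) :
    ∫ θ, g θ ∂(tilt π γ s) = (Ak π γ 0 s)⁻¹ * ∫ θ, g θ * dens γ s θ ∂π := by
  have hA0 := A0_pos hsupp hγ s
  have htilt : tilt π γ s = ((π.withDensity fun θ => ENNReal.ofReal (dens γ s θ)) Set.univ)⁻¹ •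
      π.withDensity fun θ => ENNReal.ofReal (dens γ s θ) := rfl
  have hN : (π.withDensity fun θ => ENNReal.ofReal (dens γ s θ)) Set.univ
      = ENNReal.ofReal (Ak π γ 0 s) := by
    rw [withDensity_apply _ MeasurableSet.univ, Measure.restrict_univ]
    have hi : Integrable (fun θ => dens γ s θ) π := by
      simpa using integrable_pow_dens hsupp hγ 0 s
    rw [← ofReal_integral_eq_lintegral_ofReal hi (ae_of_all _ fun θ => (dens_pos γ s θ).le)]
    simp [Ak]
  have hwd : ∀ h : ℝ → ℝ, ∫ θ, h θ ∂(π.withDensity fun θ =>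
      ENNReal.ofReal (dens γ s θ)) = ∫ θ, h θ * dens γ s θ ∂π := by
    intro h
    have : (fun θ => ENNReal.ofReal (dens γ s θ))
        = fun θ => ((Real.toNNReal (dens γ s θ) : ℝ≥0) : ℝ≥0∞) := rfl
    rw [this, integral_withDensity_eq_integral_smul
      ((dens_continuous γ s).measurable.real_toNNReal) h]
    congr 1; ext θ
    rw [NNReal.smul_def, Real.coe_toNNReal _ (dens_pos γ s θ).le, smul_eq_mul, mul_comm]
  rw [htilt, integral_smul_measure, hN, ENNReal.toReal_inv, ENNReal.toReal_ofReal hA0.le,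
    hwd g, smul_eq_mul]

section
variable {M : NNReal} {π : Measure ℝ} [IsProbabilityMeasure π]
    (hsupp : π (Set.Icc (-(M : ℝ)) (M : ℝ)) = 1) {γ : ℝ} (hγ : 0 < γ)
include hsupp hγ

lemma Ak_le (k : ℕ) (s : ℝ) : |Ak π γ k s| ≤ (M : ℝ) ^ k * Ak π γ 0 s := by
  calc |Ak π γ k s| ≤ ∫ θ, |θ| ^ k * |dens γ s θ| ∂π := by
        simpa [Ak, Real.norm_eq_abs, abs_pow] using
          norm_integral_le_integral_norm (μ := π) (fun θ => θ ^ k * dens γ s θ)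
    _ ≤ ∫ θ, (M : ℝ) ^ k * (θ ^ 0 * dens γ s θ) ∂π := by
        apply integral_mono_ae
          (by simpa [abs_mul, abs_pow] using (integrable_pow_dens hsupp hγ k s).abs)
          ((integrable_pow_dens hsupp hγ 0 s).const_mul _)
        filter_upwards [ae_mem hsupp] with θ hθ
        rw [abs_of_pos (dens_pos γ s θ), pow_zero, one_mul]
        exact mul_le_mul_of_nonneg_right (pow_le_pow_left₀ (abs_nonneg θ) hθ k)
          (dens_pos γ s θ).le
    _ = (M : ℝ) ^ k * Ak π γ 0 s := integral_const_mul _ _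

lemma condMean_eq (s : ℝ) : condMean π γ s = (Ak π γ 0 s)⁻¹ * Ak π γ 1 s := by
  rw [condMean, tilt_integral hsupp hγ s (fun θ => θ)]
  simp [Ak]

lemma abs_condMean_le (s : ℝ) : |condMean π γ s| ≤ (M : ℝ) := by
  have h0 := A0_pos hsupp hγ s
  rw [condMean_eq hsupp hγ, abs_mul, abs_inv, abs_of_pos h0, inv_mul_le_iff₀ h0]
  calc |Ak π γ 1 s| ≤ (M : ℝ) ^ 1 * Ak π γ 0 s := Ak_le hsupp hγ 1 s
    _ = Ak π γ 0 s * (M : ℝ) := by ring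

lemma integrable_shift_pow_dens (c : ℝ) (C : ℝ) (hc : |c| ≤ C) (j : ℕ) (s : ℝ) :
    Integrable (fun θ => (θ - c) ^ j * dens γ s θ) π := by
  apply integrable_of_bdd (((measurable_id.sub_const c).pow_const j).mul
    (dens_continuous γ s).measurable)
  filter_upwards [ae_mem hsupp] with θ hθ
  simp only [Pi.mul_apply, id_eq]
  rw [Real.norm_eq_abs, abs_mul, abs_pow, abs_of_pos (dens_pos γ s θ)]
  have h1 : |θ - c| ≤ (M : ℝ) + C := by
    calc |θ - c| ≤ |θ| + |c| := abs_sub _ _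
      _ ≤ (M : ℝ) + C := add_le_add hθ hc
  have hMC : (0:ℝ) ≤ (M : ℝ) + C := by
    have := abs_nonneg c
    have := M.coe_nonneg
    linarith
  calc |θ - c| ^ j * dens γ s θ ≤ ((M : ℝ) + C) ^ j * dens γ s θ :=
        mul_le_mul_of_nonneg_right (pow_le_pow_left₀ (abs_nonneg _) h1 j) (dens_pos γ s θ).le
    _ ≤ ((M : ℝ) + C) ^ j * Real.exp (s ^ 2 / (2 * γ)) :=
        mul_le_mul_of_nonneg_left (dens_le hγ s θ) (pow_nonneg hMC j)

lemma condVar_eq_int (s : ℝ) :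
    condVar π γ s = (Ak π γ 0 s)⁻¹ * ∫ θ, (θ - condMean π γ s) ^ 2 * dens γ s θ ∂π := by
  rw [_root_.condVar, tilt_integral hsupp hγ s (fun θ => (θ - condMean π γ s) ^ 2)]

lemma condVar_nonneg (s : ℝ) : 0 ≤ condVar π γ s := by
  rw [condVar_eq_int hsupp hγ]
  apply mul_nonneg (inv_nonneg.2 (A0_pos hsupp hγ s).le)
  apply integral_nonneg
  intro θ
  have := dens_pos γ s θ
  positivity

lemma moment_expand2 (s : ℝ) :
    ∫ θ, (θ - condMean π γ s) ^ 2 * dens γ s θ ∂π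
      = Ak π γ 2 s - 2 * condMean π γ s * Ak π γ 1 s
        + (condMean π γ s) ^ 2 * Ak π γ 0 s := by
  set m := condMean π γ s
  have h : (fun θ : ℝ => (θ - m) ^ 2 * dens γ s θ) = fun θ =>
      θ ^ 2 * dens γ s θ - 2 * m * (θ ^ 1 * dens γ s θ) + m ^ 2 * (θ ^ 0 * dens γ s θ) := by
    funext θ; ring
  have i2 : Integrable (fun θ => θ ^ 2 * dens γ s θ) π := integrable_pow_dens hsupp hγ 2 s
  have i1 : Integrable (fun θ => 2 * m * (θ ^ 1 * dens γ s θ)) π :=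
    (integrable_pow_dens hsupp hγ 1 s).const_mul _
  have i0 : Integrable (fun θ => m ^ 2 * (θ ^ 0 * dens γ s θ)) π :=
    (integrable_pow_dens hsupp hγ 0 s).const_mul _
  have i21 : Integrable (fun θ => θ ^ 2 * dens γ s θ - 2 * m * (θ ^ 1 * dens γ s θ)) π :=
    i2.sub i1
  rw [h, integral_add i21 i0, integral_sub i2 i1, integral_const_mul, integral_const_mul]
  rfl

lemma condVar_eq_moments (s : ℝ) :
    condVar π γ s = Ak π γ 2 s / Ak π γ 0 s - (condMean π γ s) ^ 2 := by
  have h0 := (A0_pos hsupp hγ s).ne'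
  rw [condVar_eq_int hsupp hγ, moment_expand2 hsupp hγ, condMean_eq hsupp hγ]
  field_simp
  ring

lemma condVar_le (s : ℝ) : condVar π γ s ≤ (M : ℝ) ^ 2 := by
  have h0 := A0_pos hsupp hγ s
  rw [condVar_eq_moments hsupp hγ]
  have h2 : Ak π γ 2 s / Ak π γ 0 s ≤ (M : ℝ) ^ 2 := by
    rw [div_le_iff₀ h0]
    calc Ak π γ 2 s ≤ |Ak π γ 2 s| := le_abs_self _
      _ ≤ (M : ℝ) ^ 2 * Ak π γ 0 s := Ak_le hsupp hγ 2 s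
  nlinarith [sq_nonneg (condMean π γ s)]

lemma hasDerivAt_Ak (k : ℕ) (s : ℝ) :
    HasDerivAt (Ak π γ k) (Ak π γ (k + 1) s) s := by
  have key := hasDerivAt_integral_of_dominated_loc_of_deriv_le (μ := π)
    (F := fun x θ => θ ^ k * dens γ x θ) (F' := fun x θ => θ ^ (k + 1) * dens γ x θ)
    (x₀ := s) (bound := fun _ => (M : ℝ) ^ (k + 1) * Real.exp ((|s| + 1) ^ 2 / (2 * γ)))
    (s := Metric.ball s 1) (Metric.ball_mem_nhds s one_pos)
    (Filter.Eventually.of_forall fun x =>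
      ((measurable_id.pow_const k).mul (dens_continuous γ x).measurable).aestronglyMeasurable)
    (integrable_pow_dens hsupp hγ k s)
    ((((measurable_id.pow_const (k + 1)).mul
      (dens_continuous γ s).measurable)).aestronglyMeasurable)
    ?_ ?_ ?_
  · exact key.2
  · -- bound
    filter_upwards [ae_mem hsupp] with θ hθ
    intro x hx
    have hxabs : |x| ≤ |s| + 1 := by
      have := abs_sub_abs_le_abs_sub x s
      have h2 : |x - s| < 1 := by simpa [Real.dist_eq] using hx
      linarith
    have hd : dens γ x θ ≤ Real.exp ((|s| + 1) ^ 2 / (2 * γ)) := by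
      refine (dens_le hγ x θ).trans (Real.exp_le_exp.2 ?_)
      apply div_le_div_of_nonneg_right ?_ (by positivity)
      · calc x ^ 2 = |x| ^ 2 := (sq_abs x).symm
          _ ≤ (|s| + 1) ^ 2 := by
            apply pow_le_pow_left₀ (abs_nonneg x) hxabs
    rw [Real.norm_eq_abs, abs_mul, abs_pow, abs_of_pos (dens_pos γ x θ)]
    exact mul_le_mul (pow_le_pow_left₀ (abs_nonneg θ) hθ _) hd (dens_pos γ x θ).le
      (by positivity)
  · exact integrable_const _
  · filter_upwards with θ
    intro x hx
    have h1 : HasDerivAt (fun y => y * θ - γ * θ ^ 2 / 2) θ x :=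
      (hasDerivAt_mul_const θ).sub_const _
    have h2 : HasDerivAt (fun y => dens γ y θ) (dens γ x θ * θ) x := h1.exp
    have h3 := h2.const_mul (θ ^ k)
    refine h3.congr_deriv ?_
    rw [pow_succ, dens]
    ring

lemma continuous_Ak (k : ℕ) : Continuous (Ak π γ k) :=
  continuous_iff_continuousAt.2 fun s => (hasDerivAt_Ak hsupp hγ k s).continuousAt

lemma continuous_condMean : Continuous (condMean π γ) := by
  have : condMean π γ = fun s => (Ak π γ 0 s)⁻¹ * Ak π γ 1 s :=
    funext fun s => condMean_eq hsupp hγ s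
  rw [this]
  exact ((continuous_Ak hsupp hγ 0).inv₀
    fun s => (A0_pos hsupp hγ s).ne').mul (continuous_Ak hsupp hγ 1)

lemma continuous_condVar : Continuous (condVar π γ) := by
  have : condVar π γ = fun s => Ak π γ 2 s / Ak π γ 0 s - (condMean π γ s) ^ 2 :=
    funext fun s => condVar_eq_moments hsupp hγ s
  rw [this]
  exact ((continuous_Ak hsupp hγ 2).div (continuous_Ak hsupp hγ 0)
    fun s => (A0_pos hsupp hγ s).ne').sub ((continuous_condMean hsupp hγ).pow 2)

lemma continuous_Efun : Continuous (Efun π γ) := by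
  unfold Efun
  have h0 : Continuous fun s => (Ak π γ 0 s)⁻¹ :=
    (continuous_Ak hsupp hγ 0).inv₀ fun s => (A0_pos hsupp hγ s).ne'
  have hm := continuous_condMean hsupp hγ
  exact h0.mul ((((continuous_Ak hsupp hγ 3).sub
    ((continuous_const.mul hm).mul (continuous_Ak hsupp hγ 2))).add
    ((continuous_const.mul (hm.pow 2)).mul (continuous_Ak hsupp hγ 1))).sub
    ((hm.pow 3).mul (continuous_Ak hsupp hγ 0)))

lemma hasDerivAt_condVar (s : ℝ) : HasDerivAt (condVar π γ) (Efun π γ s) s := by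
  have hv : condVar π γ = fun t => Ak π γ 2 t / Ak π γ 0 t - (Ak π γ 1 t / Ak π γ 0 t) ^ 2 := by
    funext t
    rw [condVar_eq_moments hsupp hγ, condMean_eq hsupp hγ, inv_mul_eq_div]
  rw [hv]
  have d0 := hasDerivAt_Ak hsupp hγ 0 s
  have d1 := hasDerivAt_Ak hsupp hγ 1 s
  have d2 := hasDerivAt_Ak hsupp hγ 2 s
  have h0 := (A0_pos hsupp hγ s).ne'
  have q2 := d2.div d0 h0
  have q1 := (d1.div d0 h0).pow 2
  have := q2.sub q1
  refine this.congr_deriv ?_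
  symm
  rw [Efun, condMean_eq hsupp hγ, Pi.div_apply]
  norm_num
  field_simp
  ring

lemma moment_expand3 (s : ℝ) :
    ∫ θ, (θ - condMean π γ s) ^ 3 * dens γ s θ ∂π
      = Ak π γ 3 s - 3 * condMean π γ s * Ak π γ 2 s
        + 3 * (condMean π γ s) ^ 2 * Ak π γ 1 s - (condMean π γ s) ^ 3 * Ak π γ 0 s := by
  set m := condMean π γ s with hm
  have h : (fun θ : ℝ => (θ - m) ^ 3 * dens γ s θ) = fun θ =>
      θ ^ 3 * dens γ s θ - 3 * m * (θ ^ 2 * dens γ s θ)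
        + 3 * m ^ 2 * (θ ^ 1 * dens γ s θ) - m ^ 3 * (θ ^ 0 * dens γ s θ) := by
    funext θ; ring
  have i3 : Integrable (fun θ => θ ^ 3 * dens γ s θ) π := integrable_pow_dens hsupp hγ 3 s
  have i2 : Integrable (fun θ => 3 * m * (θ ^ 2 * dens γ s θ)) π :=
    (integrable_pow_dens hsupp hγ 2 s).const_mul _
  have i1 : Integrable (fun θ => 3 * m ^ 2 * (θ ^ 1 * dens γ s θ)) π :=
    (integrable_pow_dens hsupp hγ 1 s).const_mul _
  have i0 : Integrable (fun θ => m ^ 3 * (θ ^ 0 * dens γ s θ)) π :=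
    (integrable_pow_dens hsupp hγ 0 s).const_mul _
  have i32 : Integrable (fun θ => θ ^ 3 * dens γ s θ - 3 * m * (θ ^ 2 * dens γ s θ)) π :=
    i3.sub i2
  have i321 : Integrable (fun θ => θ ^ 3 * dens γ s θ - 3 * m * (θ ^ 2 * dens γ s θ)
      + 3 * m ^ 2 * (θ ^ 1 * dens γ s θ)) π := i32.add i1
  rw [h, integral_sub i321 i0, integral_add i32 i1, integral_sub i3 i2,
    integral_const_mul, integral_const_mul, integral_const_mul]
  rfl

lemma Efun_eq_int (s : ℝ) :
    Efun π γ s = (Ak π γ 0 s)⁻¹ * ∫ θ, (θ - condMean π γ s) ^ 3 * dens γ s θ ∂π := by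
  rw [Efun, moment_expand3 hsupp hγ]

lemma abs_Efun_le (s : ℝ) :
    |Efun π γ s| ≤ 2 * (M : ℝ) ^ 2 * Real.sqrt (condVar π γ s) := by
  have h0 := A0_pos hsupp hγ s
  have hv := condVar_nonneg hsupp hγ s
  have hvM := condVar_le hsupp hγ s
  have hsq : Real.sqrt (condVar π γ s) ≤ (M : ℝ) := by
    rw [show ((M : ℝ)) = Real.sqrt ((M : ℝ) ^ 2) from (Real.sqrt_sq M.coe_nonneg).symm]
    exact Real.sqrt_le_sqrt hvM
  have step1 : |Efun π γ s| ≤ 2 * (M : ℝ) * condVar π γ s := by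
    rw [Efun_eq_int hsupp hγ, abs_mul, abs_inv, abs_of_pos h0]
    have habs : |∫ θ, (θ - condMean π γ s) ^ 3 * dens γ s θ ∂π|
        ≤ ∫ θ, 2 * (M : ℝ) * ((θ - condMean π γ s) ^ 2 * dens γ s θ) ∂π := by
      calc |∫ θ, (θ - condMean π γ s) ^ 3 * dens γ s θ ∂π|
          ≤ ∫ θ, |(θ - condMean π γ s) ^ 3 * dens γ s θ| ∂π := by
            simpa only [Real.norm_eq_abs] using norm_integral_le_integral_norm (μ := π)
              (fun θ => (θ - condMean π γ s) ^ 3 * dens γ s θ)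
        _ ≤ ∫ θ, 2 * (M : ℝ) * ((θ - condMean π γ s) ^ 2 * dens γ s θ) ∂π := by
            apply integral_mono_ae
              ((integrable_shift_pow_dens hsupp hγ _ _ (abs_condMean_le hsupp hγ s) 3 s).abs)
              (((integrable_shift_pow_dens hsupp hγ _ _ (abs_condMean_le hsupp hγ s) 2 s)).const_mul _)
            filter_upwards [ae_mem hsupp] with θ hθ
            rw [abs_mul, abs_pow, abs_of_pos (dens_pos γ s θ)]
            have hdm : |θ - condMean π γ s| ≤ 2 * (M : ℝ) := by
              calc |θ - condMean π γ s| ≤ |θ| + |condMean π γ s| := abs_sub _ _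
                _ ≤ (M : ℝ) + (M : ℝ) := add_le_add hθ (abs_condMean_le hsupp hγ s)
                _ = 2 * (M : ℝ) := by ring
            calc |θ - condMean π γ s| ^ 3 * dens γ s θ
                = |θ - condMean π γ s| * (|θ - condMean π γ s| ^ 2 * dens γ s θ) := by ring
              _ ≤ 2 * (M : ℝ) * (|θ - condMean π γ s| ^ 2 * dens γ s θ) := by
                  apply mul_le_mul_of_nonneg_right hdm
                  have := dens_pos γ s θ
                  positivity
              _ = 2 * (M : ℝ) * ((θ - condMean π γ s) ^ 2 * dens γ s θ) := by
                  rw [sq_abs]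
    calc (Ak π γ 0 s)⁻¹ * |∫ θ, (θ - condMean π γ s) ^ 3 * dens γ s θ ∂π|
        ≤ (Ak π γ 0 s)⁻¹ * ∫ θ, 2 * (M : ℝ) * ((θ - condMean π γ s) ^ 2 * dens γ s θ) ∂π :=
          mul_le_mul_of_nonneg_left habs (inv_nonneg.2 h0.le)
      _ = 2 * (M : ℝ) * condVar π γ s := by
          rw [integral_const_mul, condVar_eq_int hsupp hγ]; ring
  calc |Efun π γ s| ≤ 2 * (M : ℝ) * condVar π γ s := step1
    _ = 2 * (M : ℝ) * (Real.sqrt (condVar π γ s) * Real.sqrt (condVar π γ s)) := by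
        rw [Real.mul_self_sqrt hv]
    _ ≤ 2 * (M : ℝ) * ((M : ℝ) * Real.sqrt (condVar π γ s)) := by
        apply mul_le_mul_of_nonneg_left
          (mul_le_mul_of_nonneg_right hsq (Real.sqrt_nonneg _)) (by positivity)
    _ = 2 * (M : ℝ) ^ 2 * Real.sqrt (condVar π γ s) := by ring

lemma key_bound (a b : ℝ) :
    |condVar π γ a - condVar π γ b| ≤ 2 * (M : ℝ) ^ 2 * |Gam π γ a - Gam π γ b| := by
  have hs : Continuous fun s => Real.sqrt (condVar π γ s) :=
    Real.continuous_sqrt.comp (continuous_condVar hsupp hγ)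
  have main : ∀ a b : ℝ, a ≤ b →
      |condVar π γ a - condVar π γ b| ≤ 2 * (M : ℝ) ^ 2 * |Gam π γ a - Gam π γ b| := by
    intro a b hab
    have hFTC : ∫ s in a..b, Efun π γ s = condVar π γ b - condVar π γ a :=
      intervalIntegral.integral_eq_sub_of_hasDerivAt
        (fun x _ => hasDerivAt_condVar hsupp hγ x)
        ((continuous_Efun hsupp hγ).intervalIntegrable a b)
    have hGam : Gam π γ b - Gam π γ a = ∫ s in a..b, Real.sqrt (condVar π γ s) := by
      rw [Gam, Gam]
      exact intervalIntegral.integral_interval_sub_left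
        (hs.intervalIntegrable 0 b) (hs.intervalIntegrable 0 a)
    have hGamnn : 0 ≤ Gam π γ b - Gam π γ a := by
      rw [hGam]
      exact intervalIntegral.integral_nonneg hab fun s _ => Real.sqrt_nonneg _
    have hchain : |condVar π γ b - condVar π γ a| ≤ 2 * (M : ℝ) ^ 2 * (Gam π γ b - Gam π γ a) := by
      rw [← hFTC]
      calc |∫ s in a..b, Efun π γ s| ≤ ∫ s in a..b, |Efun π γ s| :=
            intervalIntegral.abs_integral_le_integral_abs hab
        _ ≤ ∫ s in a..b, 2 * (M : ℝ) ^ 2 * Real.sqrt (condVar π γ s) := by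
            apply intervalIntegral.integral_mono_on hab
              ((continuous_Efun hsupp hγ).abs.intervalIntegrable a b)
              ((continuous_const.mul hs).intervalIntegrable a b)
            exact fun s _ => abs_Efun_le hsupp hγ s
        _ = 2 * (M : ℝ) ^ 2 * (Gam π γ b - Gam π γ a) := by
            rw [hGam, intervalIntegral.integral_const_mul]
    rw [abs_sub_comm (condVar π γ a) _, abs_sub_comm (Gam π γ a) _, abs_of_nonneg hGamnn]
    exact hchain
  rcases le_total a b with h | h
  · exact main a b h
  · rw [abs_sub_comm (condVar π γ a) _, abs_sub_comm (Gam π γ a) _]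
    exact main b a h

end

/-- Lemma D-p: if `π_Θ` is supported in `[-M, M]` and `γ > 0`,
then `Q(p) = Var[Θ | γΘ + √γ G = Γ_γ⁻¹(p)]` is `3M²`-Lipschitz on the range of `Γ_γ`. -/
theorem stmt13 (M : NNReal) (π : Measure ℝ) [IsProbabilityMeasure π]
    (hsupp : π (Set.Icc (-(M : ℝ)) (M : ℝ)) = 1) (γ : ℝ) (hγ : 0 < γ) :
    LipschitzOnWith (3 * M ^ 2)
      (fun p => condVar π γ (Function.invFun (Gam π γ) p))
      (Set.range (Gam π γ)) := by
  rw [lipschitzOnWith_iff_dist_le_mul]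
  intro p hp q hq
  have hGp : Gam π γ (Function.invFun (Gam π γ) p) = p := Function.invFun_eq hp
  have hGq : Gam π γ (Function.invFun (Gam π γ) q) = q := Function.invFun_eq hq
  set a := Function.invFun (Gam π γ) p
  set b := Function.invFun (Gam π γ) q
  have hkey := key_bound hsupp hγ a b
  rw [hGp, hGq] at hkey
  have hM : ((3 * M ^ 2 : NNReal) : ℝ) = 3 * (M : ℝ) ^ 2 := by push_cast; ring
  rw [Real.dist_eq, Real.dist_eq, hM]
  calc |condVar π γ a - condVar π γ b| ≤ 2 * (M : ℝ) ^ 2 * |p - q| := hkey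
    _ ≤ 3 * (M : ℝ) ^ 2 * |p - q| := by
        apply mul_le_mul_of_nonneg_right _ (abs_nonneg _)
        nlinarith [M.coe_nonneg, sq_nonneg (M : ℝ)]
end
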